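/- arXiv:2209.03587 — 2 statements merged into one kernel-verified Lean document; each statement's English description precedes it below -/
import Mathlib

section
/- Let κ > 0 and r > 0 satisfy κ ≥ 1/r², and let a > 0. Define F_a : ℝ → ℝ by F_a(x) := a⁻¹·log(e^{ax} + e^{−ax}) and h : ℝ → ℝ by h(t) := F_a(sin(t/r)). Then h''(t) + κ·h(t) ≥ 0 for every t ∈ ℝ, where h'' denotes the second derivative of h. -/
/-- A bundled mm-space: a complete separable metric space with a Borel probability measure. -/
structure MMSpace where
  X : Type
  [metric : MetricSpace X]
  [cpl : CompleteSpace X]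
  [sep : TopologicalSpace.SeparableSpace X]
  [mble : MeasurableSpace X]
  [borel : BorelSpace X]
  μ : MeasureTheory.Measure X
  [prob : MeasureTheory.IsProbabilityMeasure μ]

attribute [instance] MMSpace.metric MMSpace.cpl MMSpace.sep MMSpace.mble MMSpace.borel MMSpace.prob

open MeasureTheory ENNReal Filter Topology Set

noncomputable section

/-- A coupling of two measures on `X` is a measure on `X × X` whose marginals are the
given measures. -/
def IsCoupling {X : Type*} [MeasurableSpace X] (π : Measure (X × X)) (μ ν : Measure X) : Prop :=
  π.map Prod.fst = μ ∧ π.map Prod.snd = ν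

/-- A measure has finite second moment if `∫ d(x,x₀)² dμ < ∞` for some base point. -/
def HasFiniteSecondMoment {X : Type*} [PseudoMetricSpace X] [MeasurableSpace X]
    (μ : Measure X) : Prop :=
  ∃ x₀ : X, ∫⁻ x, ENNReal.ofReal (dist x x₀) ^ 2 ∂μ < ∞

/-- The square-root of the quadratic transport cost of a coupling. -/
def cost2 {X : Type*} [PseudoMetricSpace X] [MeasurableSpace X] (π : Measure (X × X)) : ℝ≥0∞ :=
  (∫⁻ p, ENNReal.ofReal (dist p.1 p.2) ^ 2 ∂π) ^ (1 / 2 : ℝ)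

/-- The 2-Wasserstein distance (valued in `[0,∞]`). -/
def W2 {X : Type*} [PseudoMetricSpace X] [MeasurableSpace X] (μ ν : Measure X) : ℝ≥0∞ :=
  ⨅ (π : Measure (X × X)) (_ : IsCoupling π μ ν), cost2 π

/-- A coupling is optimal if it attains the 2-Wasserstein distance. -/
def IsOptimalCoupling {X : Type*} [PseudoMetricSpace X] [MeasurableSpace X]
    (π : Measure (X × X)) (μ ν : Measure X) : Prop :=
  IsCoupling π μ ν ∧ cost2 π = W2 μ ν

open Classical in
/-- The Rényi entropy `S_{N',μ}(ν) = ∫ ρ^{1-1/N'} dμ` if `ν = ρμ ≪ μ`, and `∞` otherwise. -/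
def renyiEntropy {X : Type*} [MeasurableSpace X] (N' : ℝ) (μ ν : Measure X) : ℝ≥0∞ :=
  if ν ≪ μ then ∫⁻ x, (ν.rnDeriv μ x) ^ (1 - 1 / N') ∂μ else ∞

/-- Weak convergence of a sequence of measures: convergence of integrals of all bounded
continuous functions. -/
def WeakConv {X : Type*} [TopologicalSpace X] [MeasurableSpace X]
    (μs : ℕ → Measure X) (μ : Measure X) : Prop :=
  ∀ f : BoundedContinuousFunction X ℝ,
    Tendsto (fun n => ∫ x, f x ∂(μs n)) atTop (𝓝 (∫ x, f x ∂μ))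

/-- Tightness of a sequence of measures. -/
def IsTightSeq {X : Type*} [TopologicalSpace X] [MeasurableSpace X]
    (μs : ℕ → Measure X) : Prop :=
  ∀ ε : ℝ, 0 < ε → ∃ K : Set X, IsCompact K ∧ ∀ n, μs n Kᶜ < ENNReal.ofReal ε

/-- The function `s_κ`, with the convention `s_κ(0) = 1`. -/
def sKappa (κ θ : ℝ) : ℝ :=
  if θ = 0 then 1
  else if 0 < κ then Real.sin (Real.sqrt κ * θ) / (Real.sqrt κ * θ)
  else if κ < 0 then Real.sinh (Real.sqrt (-κ) * θ) / (Real.sqrt (-κ) * θ)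
  else 1

/-- `ω_κ = π/√κ` for `κ > 0` and `∞` otherwise. -/
def omegaKappa (κ : ℝ) : ℝ≥0∞ :=
  if 0 < κ then ENNReal.ofReal (Real.pi / Real.sqrt κ) else ∞

/-- The coefficient `τ_{K,N}^{(t)}(θ)`, valued in `[0,∞]`. -/
def tauCoeff (K N t θ : ℝ) : ℝ≥0∞ :=
  if ENNReal.ofReal θ < omegaKappa (K / (N - 1)) then
    ENNReal.ofReal (t * (sKappa (K / (N - 1)) (t * θ) / sKappa (K / (N - 1)) θ) ^ (1 - 1 / N))
  else ∞

/-- The coefficient `σ_κ^{(t)}(θ)`, valued in `[0,∞]`. -/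
def sigmaCoeff (κ t θ : ℝ) : ℝ≥0∞ :=
  if ENNReal.ofReal θ < omegaKappa κ then
    ENNReal.ofReal (t * sKappa κ (t * θ) / sKappa κ θ)
  else ∞

/-- The curvature-dimension condition `CD(K,N)` for `N < 0`, for a (probability) measure on a
metric space. -/
def IsCDSpace {X : Type*} [MetricSpace X] [MeasurableSpace X] (K N : ℝ) (μX : Measure X) : Prop :=
  ∀ ν₀ ν₁ : Measure X, IsProbabilityMeasure ν₀ → IsProbabilityMeasure ν₁ →
    ν₀ ≪ μX → ν₁ ≪ μX →
    HasFiniteSecondMoment ν₀ → HasFiniteSecondMoment ν₁ →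
    renyiEntropy N μX ν₀ < ∞ → renyiEntropy N μX ν₁ < ∞ →
    ∃ (νt : ℝ → Measure X) (π : Measure (X × X)),
      νt 0 = ν₀ ∧ νt 1 = ν₁ ∧
      (∀ s ∈ Icc (0:ℝ) 1, ∀ t ∈ Icc (0:ℝ) 1,
        W2 (νt s) (νt t) = ENNReal.ofReal |s - t| * W2 ν₀ ν₁) ∧
      IsOptimalCoupling π ν₀ ν₁ ∧
      (∀ t ∈ Icc (0:ℝ) 1, ∀ N' ∈ Ico N (0:ℝ),
        renyiEntropy N' μX ν₀ < ∞ → renyiEntropy N' μX ν₁ < ∞ →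
        renyiEntropy N' μX (νt t) ≤
          (∫⁻ p, tauCoeff K N' (1 - t) (dist p.1 p.2) * (ν₀.rnDeriv μX p.1) ^ (-(1 / N')) ∂π)
          + ∫⁻ p, tauCoeff K N' t (dist p.1 p.2) * (ν₁.rnDeriv μX p.2) ^ (-(1 / N')) ∂π)

/-- The reduced curvature-dimension condition `CD*(K,N)` for `N < 0`. -/
def IsCDStarSpace {X : Type*} [MetricSpace X] [MeasurableSpace X] (K N : ℝ)
    (μX : Measure X) : Prop :=
  ∀ ν₀ ν₁ : Measure X, IsProbabilityMeasure ν₀ → IsProbabilityMeasure ν₁ →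
    ν₀ ≪ μX → ν₁ ≪ μX →
    HasFiniteSecondMoment ν₀ → HasFiniteSecondMoment ν₁ →
    renyiEntropy N μX ν₀ < ∞ → renyiEntropy N μX ν₁ < ∞ →
    ∃ (νt : ℝ → Measure X) (π : Measure (X × X)),
      νt 0 = ν₀ ∧ νt 1 = ν₁ ∧
      (∀ s ∈ Icc (0:ℝ) 1, ∀ t ∈ Icc (0:ℝ) 1,
        W2 (νt s) (νt t) = ENNReal.ofReal |s - t| * W2 ν₀ ν₁) ∧
      IsOptimalCoupling π ν₀ ν₁ ∧
      (∀ t ∈ Icc (0:ℝ) 1, ∀ N' ∈ Ico N (0:ℝ),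
        renyiEntropy N' μX ν₀ < ∞ → renyiEntropy N' μX ν₁ < ∞ →
        renyiEntropy N' μX (νt t) ≤
          (∫⁻ p, sigmaCoeff (K / N') (1 - t) (dist p.1 p.2)
              * (ν₀.rnDeriv μX p.1) ^ (-(1 / N')) ∂π)
          + ∫⁻ p, sigmaCoeff (K / N') t (dist p.1 p.2)
              * (ν₁.rnDeriv μX p.2) ^ (-(1 / N')) ∂π)

/-- The conditioned (normalized restricted) measure `ν_B`. -/
def condProb {X : Type*} [MeasurableSpace X] (ν : Measure X) (B : Set X) : Measure X :=
  (ν B)⁻¹ • ν.restrict B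

/-- Inverse hyperbolic cosine, `arcosh x = log (x + √(x²-1))`. -/
def acosh (x : ℝ) : ℝ := Real.log (x + Real.sqrt (x ^ 2 - 1))

/-- A parameter of an mm-space: a Borel map `[0,1) → X` pushing the Lebesgue measure to `μ`. -/
def IsParameter (A : MMSpace) (φ : ℝ → A.X) : Prop :=
  Measurable φ ∧ Measure.map φ (volume.restrict (Ico (0:ℝ) 1)) = A.μ

/-- The Ky Fan distance between two measurable functions on `[0,1)`. -/
def kyFan (f g : ℝ → ℝ) : ℝ :=
  sInf {ε : ℝ | 0 ≤ ε ∧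
    (volume.restrict (Ico (0:ℝ) 1)) {x | ε < |f x - g x|} ≤ ENNReal.ofReal ε}

/-- The pullback of the 1-Lipschitz functions on an mm-space by a parameter. -/
def pullLip (A : MMSpace) (φ : ℝ → A.X) : Set (ℝ → ℝ) :=
  {h | ∃ f : A.X → ℝ, LipschitzWith 1 f ∧ h = f ∘ φ}

/-- The Hausdorff distance between two sets of functions with respect to the Ky Fan metric. -/
def hausdorffKF (A B : Set (ℝ → ℝ)) : ℝ :=
  max (⨆ f ∈ A, ⨅ g ∈ B, kyFan f g) (⨆ g ∈ B, ⨅ f ∈ A, kyFan f g)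

/-- The observable distance between two mm-spaces. -/
def dconc (A B : MMSpace) : ℝ :=
  sInf {r : ℝ | ∃ φ ψ, IsParameter A φ ∧ IsParameter B ψ ∧
    r = hausdorffKF (pullLip A φ) (pullLip B ψ)}

end

noncomputable section

/-- The smooth approximation `F_a(x) = a⁻¹ log(e^{ax} + e^{-ax})` of `|x|`. -/
def Fa (a x : ℝ) : ℝ := a⁻¹ * Real.log (Real.exp (a * x) + Real.exp (-(a * x)))

/-- A (minimizing, constant-speed) geodesic parametrized by `[0,1]`. -/
def IsGeodOn01 {X : Type*} [PseudoMetricSpace X] (γ : ℝ → X) : Prop :=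
  ∀ s ∈ Set.Icc (0:ℝ) 1, ∀ s' ∈ Set.Icc (0:ℝ) 1,
    dist (γ s) (γ s') = |s - s'| * dist (γ 0) (γ 1)

end


lemma hasDerivAt_Fa (a : ℝ) (ha : a ≠ 0) (x : ℝ) :
    HasDerivAt (Fa a) (Real.sinh (a * x) / Real.cosh (a * x)) x := by
  have hax : HasDerivAt (fun x : ℝ => a * x) a x := by
    simpa using (hasDerivAt_id x).const_mul a
  have e1 := hax.exp
  have e2 := hax.neg.exp
  have hpos : 0 < Real.exp (a * x) + Real.exp (-(a * x)) := by positivity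
  have l := ((e1.add e2).log hpos.ne').const_mul a⁻¹
  refine l.congr_deriv ?_
  simp only [Pi.add_apply, Pi.neg_apply]
  rw [Real.sinh_eq, Real.cosh_eq, Real.exp_neg]
  have h1 : Real.exp (a * x) > 0 := Real.exp_pos _
  rw [Real.exp_neg] at hpos
  field_simp
  ring

lemma hasDerivAt_h (a r : ℝ) (ha : a ≠ 0) (t : ℝ) :
    HasDerivAt (fun s => Fa a (Real.sin (s / r)))
      (Real.sinh (a * Real.sin (t / r)) / Real.cosh (a * Real.sin (t / r))
        * (Real.cos (t / r) * (1 / r))) t := by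
  have hdiv : HasDerivAt (fun s : ℝ => s / r) (1 / r) t := by
    simpa using (hasDerivAt_id t).div_const r
  exact HasDerivAt.comp (h₂ := Fa a) t (hasDerivAt_Fa a ha (Real.sin (t / r))) hdiv.sin

lemma deriv_h (a r : ℝ) (ha : a ≠ 0) :
    deriv (fun s => Fa a (Real.sin (s / r))) = fun t =>
      Real.sinh (a * Real.sin (t / r)) / Real.cosh (a * Real.sin (t / r))
        * (Real.cos (t / r) * (1 / r)) :=
  funext fun t => (hasDerivAt_h a r ha t).deriv

lemma hasDerivAt_h' (a r : ℝ) (ha : a ≠ 0) (hr : r ≠ 0) (t : ℝ) :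
    HasDerivAt (fun t => Real.sinh (a * Real.sin (t / r)) / Real.cosh (a * Real.sin (t / r))
        * (Real.cos (t / r) * (1 / r)))
      (a * Real.cos (t / r) ^ 2 / (r ^ 2 * Real.cosh (a * Real.sin (t / r)) ^ 2)
        - Real.sinh (a * Real.sin (t / r)) / Real.cosh (a * Real.sin (t / r))
          * Real.sin (t / r) / r ^ 2) t := by
  have hdiv : HasDerivAt (fun s : ℝ => s / r) (1 / r) t := by
    simpa using (hasDerivAt_id t).div_const r
  have hu : HasDerivAt (fun s : ℝ => a * Real.sin (s / r))
      (a * (Real.cos (t / r) * (1 / r))) t := hdiv.sin.const_mul a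
  have hE : Real.cosh (a * Real.sin (t / r)) ≠ 0 := (Real.cosh_pos _).ne'
  have hq := (hu.sinh.div hu.cosh hE).mul (hdiv.cos.mul_const (1 / r))
  refine hq.congr_deriv ?_
  simp only [Pi.div_apply]
  set E := Real.cosh (a * Real.sin (t / r)) with hEdef
  set H := Real.sinh (a * Real.sin (t / r)) with hHdef
  set C := Real.cos (t / r)
  set S := Real.sin (t / r)
  have key : E ^ 2 - H ^ 2 = 1 := Real.cosh_sq_sub_sinh_sq _
  have h1 : E*(a*(C*(1/r)))*E - H*(H*(a*(C*(1/r)))) = a*C/r * (E^2 - H^2) := by ring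
  rw [h1, key]
  field_simp
  ring

/-- For `κ ≥ 1/r²` and `a > 0`, the function `h(t) = F_a(sin(t/r))`
satisfies `h'' + κ h ≥ 0` everywhere. -/
theorem Fa_sin_second_deriv_ineq (κ r a : ℝ) (hκ : 0 < κ) (hr : 0 < r)
    (hκr : 1 / r ^ 2 ≤ κ) (ha : 0 < a) :
    ∀ t : ℝ,
      0 ≤ deriv (deriv fun s => Fa a (Real.sin (s / r))) t + κ * Fa a (Real.sin (t / r)) := by
  intro t
  rw [deriv_h a r ha.ne', (hasDerivAt_h' a r ha.ne' hr.ne' t).deriv]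
  set S := Real.sin (t / r) with hS
  set C := Real.cos (t / r) with hC
  set E := Real.cosh (a * S) with hE'
  set H := Real.sinh (a * S) with hH'
  set Q := Fa a S with hQ'
  have hE : 0 < E := Real.cosh_pos _
  have habs : |H| ≤ E := by
    nlinarith [Real.cosh_sq_sub_sinh_sq (a * S), abs_nonneg H, sq_abs H, hE]
  have hsum : 0 < Real.exp (a * S) + Real.exp (-(a * S)) := by positivity
  have hlog : a * |S| ≤ Real.log (Real.exp (a * S) + Real.exp (-(a * S))) := by
    rw [Real.le_log_iff_exp_le hsum]
    rcases abs_cases S with ⟨h1, _⟩ | ⟨h1, _⟩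
    · rw [h1]
      exact le_add_of_nonneg_right (Real.exp_pos _).le
    · rw [h1, mul_neg]
      exact le_add_of_nonneg_left (Real.exp_pos _).le
  have hQ1 : |S| ≤ Q := by
    rw [hQ', Fa]
    calc |S| = a⁻¹ * (a * |S|) := by field_simp
    _ ≤ a⁻¹ * Real.log (Real.exp (a * S) + Real.exp (-(a * S))) :=
        mul_le_mul_of_nonneg_left hlog (by positivity)
  have hQ0 : 0 ≤ Q := le_trans (abs_nonneg S) hQ1
  have hr2 : (0:ℝ) < r ^ 2 := by positivity
  have hHS : H / E * S ≤ Q := by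
    refine le_trans (le_trans (le_abs_self _) ?_) hQ1
    rw [abs_mul, abs_div, abs_of_pos hE]
    calc |H| / E * |S| ≤ 1 * |S| := by
          apply mul_le_mul_of_nonneg_right _ (abs_nonneg S)
          rw [div_le_one hE]; exact habs
    _ = |S| := one_mul _
  have h1 : 0 ≤ a * C ^ 2 / (r ^ 2 * E ^ 2) := by positivity
  have h2 : H / E * S / r ^ 2 ≤ Q / r ^ 2 := by gcongr
  have h3 : Q / r ^ 2 ≤ κ * Q := by
    calc Q / r ^ 2 = 1 / r ^ 2 * Q := by ring
    _ ≤ κ * Q := mul_le_mul_of_nonneg_right hκr hQ0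
  linarith
end

section
/- Let (X, d) be a complete separable metric space, let μ be a nonzero locally finite Borel measure on X, and let N < 0. For t ∈ [0,1] and subsets A₀, A₁ ⊆ X define A_t := {γ(t) : γ : [0,1] → X is a geodesic with γ(0) ∈ A₀ and γ(1) ∈ A₁}, where a geodesic is a map γ with d(γ(s), γ(s')) = |s − s'|·d(γ(0), γ(1)) for all s, s' ∈ [0,1], and μ(A_t) denotes the outer measure of A_t. Suppose that for every K > 0, every t ∈ [0,1], and all Borel sets A₀, A₁ ⊆ X with 0 < μ(A_i) < ∞ (i = 0,1), the Brunn–Minkowski inequality μ(A_t)^{1/N} ≤ Σ_{i=0,1} (sup_{x∈A₀, y∈A₁} σ_{K/N}^{(t),i}(d(x,y)))·μ(A_i)^{1/N} holds, where powers of measures are taken in [0,∞] with the conventions 0^{1/N} = ∞ and ∞^{1/N} = 0 (note 1/N < 0). Then the support of μ consists of exactly one point. -/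
open MeasureTheory ENNReal Filter Topology Set

section Aux

open MeasureTheory Set

private lemma aux_rpow_anti {a b : ℝ≥0∞} {c : ℝ} (h : a ≤ b) (hc : c ≤ 0) :
    b ^ c ≤ a ^ c := by
  rw [← neg_neg c, ENNReal.rpow_neg b, ENNReal.rpow_neg a]
  exact ENNReal.inv_le_inv.2 (ENNReal.rpow_le_rpow h (by linarith))

private lemma aux_rpow_ne_top {a : ℝ≥0∞} (h0 : a ≠ 0) (ht : a ≠ ∞) (c : ℝ) :
    a ^ c ≠ ∞ := by
  rcases le_or_gt 0 c with hc | hc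
  · exact (ENNReal.rpow_lt_top_of_nonneg hc ht).ne
  · rw [← neg_neg c, ENNReal.rpow_neg]
    exact ENNReal.inv_ne_top.2 (ENNReal.rpow_pos h0.bot_lt ht).ne'

/-- The support of a nonzero measure on a second-countable space is nonempty. -/
private lemma aux_support_nonempty {X : Type*} [MetricSpace X]
    [TopologicalSpace.SeparableSpace X] [MeasurableSpace X] [BorelSpace X]
    (μ : Measure X) (hμ0 : μ ≠ 0) :
    {y : X | ∀ r : ℝ, 0 < r → 0 < μ (Metric.ball y r)}.Nonempty := by
  have : SecondCountableTopology X := UniformSpace.secondCountable_of_separable X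
  by_contra h
  rw [Set.not_nonempty_iff_eq_empty] at h
  have h' : ∀ y : X, ∃ r : ℝ, 0 < r ∧ μ (Metric.ball y r) = 0 := by
    intro y
    have hy : y ∉ ({y : X | ∀ r : ℝ, 0 < r → 0 < μ (Metric.ball y r)}) := by
      rw [h]; exact Set.notMem_empty y
    simp only [Set.mem_setOf_eq, not_forall] at hy
    obtain ⟨r, hr, hr0⟩ := hy
    exact ⟨r, hr, by simpa [pos_iff_ne_zero] using hr0⟩
  choose r hr0 hrnull using h'
  obtain ⟨T, hTc, hT⟩ := TopologicalSpace.isOpen_iUnion_countable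
    (fun y : X => Metric.ball y (r y)) (fun y => Metric.isOpen_ball)
  have hcover : (Set.univ : Set X) = ⋃ y ∈ T, Metric.ball y (r y) := by
    rw [hT]
    refine subset_antisymm (fun z _ => ?_) (Set.subset_univ _)
    exact Set.mem_iUnion.2 ⟨z, Metric.mem_ball_self (hr0 z)⟩
  have : μ Set.univ = 0 := by
    rw [hcover]
    exact measure_biUnion_null_iff hTc |>.2 fun y _ => hrnull y
  exact hμ0 (Measure.measure_univ_eq_zero.1 this)

end Aux

set_option maxHeartbeats 2000000 in
open MeasureTheory Set in
/-- If a nonzero locally finite Borel measure on a complete separable metric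
space satisfies the Brunn–Minkowski inequality of `CD*(K,N)` (`N < 0`) for every `K > 0`, then
its support is a single point. -/
theorem support_singleton_of_BM_all_K {X : Type*} [MetricSpace X] [CompleteSpace X]
    [TopologicalSpace.SeparableSpace X] [MeasurableSpace X] [BorelSpace X]
    (μ : Measure X) (hμ0 : μ ≠ 0) (hloc : ∀ x : X, ∃ r : ℝ, 0 < r ∧ μ (Metric.ball x r) < ∞)
    (N : ℝ) (hN : N < 0)
    (hBM : ∀ K : ℝ, 0 < K → ∀ t ∈ Icc (0:ℝ) 1, ∀ A₀ A₁ : Set X,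
      MeasurableSet A₀ → MeasurableSet A₁ →
      0 < μ A₀ → μ A₀ < ∞ → 0 < μ A₁ → μ A₁ < ∞ →
      μ {z | ∃ γ : ℝ → X, IsGeodOn01 γ ∧ γ 0 ∈ A₀ ∧ γ 1 ∈ A₁ ∧ γ t = z} ^ (1 / N) ≤
        (⨆ x ∈ A₀, ⨆ y ∈ A₁, sigmaCoeff (K / N) (1 - t) (dist x y)) * μ A₀ ^ (1 / N)
          + (⨆ x ∈ A₀, ⨆ y ∈ A₁, sigmaCoeff (K / N) t (dist x y)) * μ A₁ ^ (1 / N)) :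
    ∃ x : X, {y : X | ∀ r : ℝ, 0 < r → 0 < μ (Metric.ball y r)} = {x} := by
  classical
  set S := {y : X | ∀ r : ℝ, 0 < r → 0 < μ (Metric.ball y r)} with hSdef
  have hne : S.Nonempty := aux_support_nonempty μ hμ0
  have hNne : N ≠ 0 := hN.ne
  have hinvN : 1 / N ≤ 0 := by
    apply le_of_lt; exact div_neg_of_pos_of_neg one_pos hN
  -- S is a subsingleton
  have hsub : ∀ x ∈ S, ∀ y ∈ S, x = y := by
    intro x hx y hy
    by_contra hxy
    set d := dist x y with hd_def
    have hd : 0 < d := dist_pos.2 hxy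
    obtain ⟨Rx, hRx, hRxf⟩ := hloc x
    obtain ⟨Ry, hRy, hRyf⟩ := hloc y
    obtain ⟨r, hrpos, hr2Rx, hrRy, hrd⟩ :
        ∃ r : ℝ, 0 < r ∧ 2 * r ≤ Rx ∧ r ≤ Ry ∧ r ≤ d / 4 := by
      refine ⟨min (min Rx Ry) (d / 4) / 2, ?_, ?_, ?_, ?_⟩
      · have : 0 < min (min Rx Ry) (d / 4) := lt_min (lt_min hRx hRy) (by positivity)
        positivity
      · have h1 : min (min Rx Ry) (d / 4) ≤ Rx := (min_le_left _ _).trans (min_le_left _ _)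
        linarith
      · have h1 : min (min Rx Ry) (d / 4) ≤ Ry := (min_le_left _ _).trans (min_le_right _ _)
        have h2 : (0:ℝ) < min (min Rx Ry) (d / 4) := lt_min (lt_min hRx hRy) (by positivity)
        linarith
      · have h1 : min (min Rx Ry) (d / 4) ≤ d / 4 := min_le_right _ _
        have h2 : (0:ℝ) < min (min Rx Ry) (d / 4) := lt_min (lt_min hRx hRy) (by positivity)
        linarith
    have hrRx : r ≤ Rx := by linarith
    obtain ⟨t, ht0, ht12, htr⟩ :
        ∃ t : ℝ, 0 < t ∧ t ≤ 1 / 2 ∧ t * (d + 2 * r) ≤ r := by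
      refine ⟨min (1 / 2 : ℝ) (r / (d + 2 * r)), lt_min (by norm_num) (by positivity),
        min_le_left _ _, ?_⟩
      have h1 : min (1 / 2 : ℝ) (r / (d + 2 * r)) ≤ r / (d + 2 * r) := min_le_right _ _
      have h2 : (0:ℝ) < d + 2 * r := by linarith
      calc min (1 / 2 : ℝ) (r / (d + 2 * r)) * (d + 2 * r)
          ≤ (r / (d + 2 * r)) * (d + 2 * r) := mul_le_mul_of_nonneg_right h1 h2.le
        _ = r := by field_simp
    set A₀ := Metric.ball x r with hA₀def
    set A₁ := Metric.ball y r with hA₁def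
    -- measure facts
    have hA₀pos : 0 < μ A₀ := hx r hrpos
    have hA₁pos : 0 < μ A₁ := hy r hrpos
    have hA₀fin : μ A₀ < ∞ :=
      lt_of_le_of_lt (measure_mono (Metric.ball_subset_ball hrRx)) hRxf
    have hA₁fin : μ A₁ < ∞ :=
      lt_of_le_of_lt (measure_mono (Metric.ball_subset_ball hrRy)) hRyf
    -- the intermediate set is inside ball x Rx
    have hAt : {z : X | ∃ γ : ℝ → X, IsGeodOn01 γ ∧ γ 0 ∈ A₀ ∧ γ 1 ∈ A₁ ∧ γ t = z}
        ⊆ Metric.ball x Rx := by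
      rintro z ⟨γ, hγ, h0, h1, hz⟩
      have h0' : dist (γ 0) x < r := Metric.mem_ball.1 h0
      have h1' : dist (γ 1) y < r := Metric.mem_ball.1 h1
      have hend : dist (γ 0) (γ 1) < d + 2 * r := by
        have := dist_triangle4 (γ 0) x y (γ 1)
        have hyd : dist y (γ 1) < r := by rw [dist_comm]; exact h1'
        linarith
      have hseg : dist (γ t) (γ 0) = t * dist (γ 0) (γ 1) := by
        have := hγ t ⟨ht0.le, by linarith⟩ 0 ⟨le_refl 0, zero_le_one⟩
        rw [this, sub_zero, abs_of_nonneg ht0.le]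
      have hdz : dist z x < 2 * r := by
        have htri : dist z x ≤ dist z (γ 0) + dist (γ 0) x := dist_triangle _ _ _
        have h2 : dist z (γ 0) = t * dist (γ 0) (γ 1) := by rw [← hz]; exact hseg
        have h3 : t * dist (γ 0) (γ 1) ≤ t * (d + 2 * r) :=
          mul_le_mul_of_nonneg_left hend.le ht0.le
        linarith
      exact Metric.mem_ball.2 (lt_of_lt_of_le hdz hr2Rx)
    -- the key quantities
    set L : ℝ≥0∞ := μ (Metric.ball x Rx) ^ (1 / N) with hLdef
    set m₀ : ℝ≥0∞ := μ A₀ ^ (1 / N) with hm₀def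
    set m₁ : ℝ≥0∞ := μ A₁ ^ (1 / N) with hm₁def
    have hMpos : 0 < μ (Metric.ball x Rx) := hx Rx hRx
    have hL0 : 0 < L := ENNReal.rpow_pos hMpos hRxf.ne
    have hm₀t : m₀ ≠ ∞ := aux_rpow_ne_top hA₀pos.ne' hA₀fin.ne _
    have hm₁t : m₁ ≠ ∞ := aux_rpow_ne_top hA₁pos.ne' hA₁fin.ne _
    have hsumt : m₀ + m₁ ≠ ∞ := ENNReal.add_ne_top.2 ⟨hm₀t, hm₁t⟩
    -- choose ε
    have hdiv : (0 : ℝ≥0∞) < L / (m₀ + m₁) := ENNReal.div_pos hL0.ne' hsumt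
    obtain ⟨ε, -, hε0', hεlt⟩ := ENNReal.lt_iff_exists_real_btwn.1 hdiv
    have hε0 : 0 < ε := ENNReal.ofReal_pos.1 hε0'
    have hεS : ENNReal.ofReal ε * (m₀ + m₁) < L := ENNReal.mul_lt_of_lt_div hεlt
    -- choose c and K
    obtain ⟨c, hc1, hc2⟩ :
        ∃ c : ℝ, 2 / d ≤ c ∧ (2 / (t * d)) * Real.log (2 / ε) ≤ c :=
      ⟨max (2 / d) ((2 / (t * d)) * Real.log (2 / ε)), le_max_left _ _, le_max_right _ _⟩
    have hcpos : 0 < c := lt_of_lt_of_le (by positivity) hc1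
    obtain ⟨K, hK, hκ⟩ : ∃ K : ℝ, 0 < K ∧ K / N = -c ^ 2 := by
      refine ⟨(-N) * c ^ 2, ?_, ?_⟩
      · have h1 : 0 < -N := by linarith
        positivity
      · field_simp
    have hκneg : K / N < 0 := by rw [hκ]; exact neg_lt_zero.2 (by positivity)
    have hκnot : ¬(0 < K / N) := not_lt.2 hκneg.le
    have hsqrt : Real.sqrt (-(K / N)) = c := by
      rw [hκ, neg_neg, Real.sqrt_sq hcpos.le]
    have hsk : ∀ a : ℝ, 0 < a → sKappa (K / N) a = Real.sinh (c * a) / (c * a) := by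
      intro a ha
      rw [sKappa, if_neg ha.ne', if_neg hκnot, if_pos hκneg, hsqrt]
    -- log bound
    have hlog : Real.log (2 / ε) ≤ c * t * (d / 2) := by
      have h' := mul_le_mul_of_nonneg_right hc2 (show (0:ℝ) ≤ t * d / 2 by positivity)
      have heq : (2 / (t * d)) * Real.log (2 / ε) * (t * d / 2) = Real.log (2 / ε) := by
        field_simp
      rw [heq] at h'
      calc Real.log (2 / ε) ≤ c * (t * d / 2) := h'
        _ = c * t * (d / 2) := by ring
    -- the coefficient bound
    have hcoeff : ∀ s : ℝ, 0 < s → s ≤ 1 - t → ∀ θ : ℝ, d / 2 ≤ θ →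
        sigmaCoeff (K / N) s θ ≤ ENNReal.ofReal ε := by
      intro s hs0 hs1 θ hθ
      have hθ0 : 0 < θ := lt_of_lt_of_le (by positivity) hθ
      have homega : omegaKappa (K / N) = ∞ := by rw [omegaKappa, if_neg hκnot]
      rw [sigmaCoeff, if_pos (by rw [homega]; exact ENNReal.ofReal_lt_top)]
      apply ENNReal.ofReal_le_ofReal
      rw [hsk (s * θ) (by positivity), hsk θ hθ0]
      have hsinhθ : 0 < Real.sinh (c * θ) := by
        rw [Real.sinh_pos_iff]; positivity
      have hval : s * (Real.sinh (c * (s * θ)) / (c * (s * θ))) / (Real.sinh (c * θ) / (c * θ))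
          = Real.sinh (c * (s * θ)) / Real.sinh (c * θ) := by
        field_simp
      rw [hval]
      -- analytic estimates
      have hcθ1 : 1 ≤ c * θ := by
        calc (1 : ℝ) = (2 / d) * (d / 2) := by field_simp
          _ ≤ c * θ := mul_le_mul hc1 hθ (by positivity) hcpos.le
      have hden : Real.exp (c * θ) / 4 ≤ Real.sinh (c * θ) := by
        rw [Real.sinh_eq]
        have h1 : Real.exp (-(c * θ)) ≤ Real.exp (-1) := Real.exp_le_exp.2 (by linarith)
        have h2 : Real.exp (-1) ≤ 1 / 2 := by
          rw [Real.exp_neg]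
          rw [inv_le_comm₀ (Real.exp_pos 1) (by norm_num)]
          have := Real.add_one_le_exp (1 : ℝ)
          linarith
        have h3 : (1 : ℝ) / 2 ≤ Real.exp (c * θ) / 2 := by
          have := Real.one_le_exp (show (0:ℝ) ≤ c * θ by linarith)
          linarith
        have : Real.exp (-(c * θ)) ≤ Real.exp (c * θ) / 2 := by linarith
        linarith
      have hnum : Real.sinh (c * (s * θ)) ≤ Real.exp (c * (s * θ)) / 2 := by
        rw [Real.sinh_eq]
        have := Real.exp_pos (-(c * (s * θ)))
        linarith
      have hstep : Real.sinh (c * (s * θ)) / Real.sinh (c * θ)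
          ≤ (Real.exp (c * (s * θ)) / 2) / (Real.exp (c * θ) / 4) :=
        div_le_div₀ (by positivity) hnum (by positivity) hden
      have heq2 : (Real.exp (c * (s * θ)) / 2) / (Real.exp (c * θ) / 4)
          = 2 * Real.exp (c * (s * θ) - c * θ) := by
        rw [Real.exp_sub]
        field_simp
        ring
      have hexp1 : c * (s * θ) - c * θ ≤ -(c * t * (d / 2)) := by
        have h1 : c * (d / 2) * t ≤ c * θ * (1 - s) := by
          apply mul_le_mul _ (by linarith) ht0.le (by positivity)
          exact mul_le_mul_of_nonneg_left hθ hcpos.le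
        nlinarith
      have hexp2 : Real.exp (c * (s * θ) - c * θ) ≤ Real.exp (-(c * t * (d / 2))) :=
        Real.exp_le_exp.2 hexp1
      have hfin : 2 * Real.exp (-(c * t * (d / 2))) ≤ ε := by
        have h1 : -(c * t * (d / 2)) ≤ Real.log (ε / 2) := by
          have h2 : Real.log (ε / 2) = -Real.log (2 / ε) := by
            rw [show ε / 2 = (2 / ε)⁻¹ by field_simp, Real.log_inv]
          rw [h2]; linarith
        have h3 : Real.exp (-(c * t * (d / 2))) ≤ ε / 2 := by
          calc Real.exp (-(c * t * (d / 2))) ≤ Real.exp (Real.log (ε / 2)) :=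
                Real.exp_le_exp.2 h1
            _ = ε / 2 := Real.exp_log (by positivity)
        linarith
      calc Real.sinh (c * (s * θ)) / Real.sinh (c * θ)
          ≤ 2 * Real.exp (c * (s * θ) - c * θ) := by rw [← heq2]; exact hstep
        _ ≤ 2 * Real.exp (-(c * t * (d / 2))) := by linarith
        _ ≤ ε := hfin
    -- sup bound
    have hsup : ∀ s : ℝ, 0 < s → s ≤ 1 - t →
        (⨆ x' ∈ A₀, ⨆ y' ∈ A₁, sigmaCoeff (K / N) s (dist x' y')) ≤ ENNReal.ofReal ε := by
      intro s hs0 hs1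
      refine iSup₂_le fun x' hx' => iSup₂_le fun y' hy' => hcoeff s hs0 hs1 _ ?_
      have hx'' : dist x' x < r := Metric.mem_ball.1 hx'
      have hy'' : dist y' y < r := Metric.mem_ball.1 hy'
      have htri : dist x y ≤ dist x x' + dist x' y' + dist y' y := dist_triangle4 _ _ _ _
      have hxx : dist x x' < r := by rw [dist_comm]; exact hx''
      linarith
    -- apply BM
    have htmem : t ∈ Icc (0 : ℝ) 1 := ⟨ht0.le, by linarith⟩
    have hmain := hBM K hK t htmem A₀ A₁ Metric.isOpen_ball.measurableSet
      Metric.isOpen_ball.measurableSet hA₀pos hA₀fin hA₁pos hA₁fin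
    have hchain : L ≤ ENNReal.ofReal ε * (m₀ + m₁) := by
      calc L ≤ μ {z : X | ∃ γ : ℝ → X, IsGeodOn01 γ ∧ γ 0 ∈ A₀ ∧ γ 1 ∈ A₁ ∧ γ t = z}
            ^ (1 / N) := aux_rpow_anti (measure_mono hAt) hinvN
        _ ≤ (⨆ x' ∈ A₀, ⨆ y' ∈ A₁, sigmaCoeff (K / N) (1 - t) (dist x' y')) * m₀
            + (⨆ x' ∈ A₀, ⨆ y' ∈ A₁, sigmaCoeff (K / N) t (dist x' y')) * m₁ := hmain
        _ ≤ ENNReal.ofReal ε * m₀ + ENNReal.ofReal ε * m₁ := by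
            gcongr
            · exact hsup (1 - t) (by linarith) (le_refl _)
            · exact hsup t ht0 (by linarith)
        _ = ENNReal.ofReal ε * (m₀ + m₁) := (mul_add _ _ _).symm
    exact absurd (lt_of_le_of_lt hchain hεS) (lt_irrefl L)
  obtain ⟨x₀, hx₀⟩ := hne
  exact ⟨x₀, Set.eq_singleton_iff_unique_mem.2 ⟨hx₀, fun y hy => hsub y hy x₀ hx₀⟩⟩
end
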